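/- Let x be a unimodular lattice in ℝ², Q₀(v₁,v₂)=v₁v₂, F⁺ = {g_t : t ≥ 0} with g_t = diag(e^t, e^{−t}), a ≠ 0 a real number, and v ∈ ℝ² with Q₀(v) = a. If some lattice x₀ in the closure of the orbit {g_t x : t ∈ ℝ} contains v, then a lies in the closure of Q₀(x \ {0}). -/

import Mathlib

open Matrix

noncomputable section

abbrev SL2R := Matrix.SpecialLinearGroup (Fin 2) ℝ

/-- The diagonal flow g_t = diag(e^t, e^{-t}). -/
def gT (t : ℝ) : SL2R :=
  ⟨!![Real.exp t, 0; 0, Real.exp (-t)], by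
    simp [Matrix.det_fin_two_of, ← Real.exp_add]⟩

/-- Γ = SL₂(ℤ) inside SL₂(ℝ). -/
def Gamma : Subgroup SL2R :=
  (Matrix.SpecialLinearGroup.map (n := Fin 2) (Int.castRingHom ℝ)).range

/-- X = SL₂(ℝ)/SL₂(ℤ), the space of unimodular lattices in ℝ², with the
quotient topology. -/
instance : TopologicalSpace SL2R :=
  TopologicalSpace.induced (fun g : SL2R => (g : Matrix (Fin 2) (Fin 2) ℝ)) inferInstance

abbrev XSp := SL2R ⧸ Gamma

/-- `v` belongs to the lattice represented by `x ∈ X`, i.e. for some representative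
`g` of `x`, `v` is an integer combination of the columns of `g`. -/
def latMem (v : Fin 2 → ℝ) (x : XSp) : Prop :=
  ∃ g : SL2R, (QuotientGroup.mk g : XSp) = x ∧
    ∃ p : Fin 2 → ℤ, v = (g : Matrix (Fin 2) (Fin 2) ℝ).mulVec fun i => (p i : ℝ)

-- auxiliary
lemma latMem_mk_iff (w : Fin 2 → ℝ) (g : SL2R) :
    latMem w (QuotientGroup.mk g : XSp) ↔
      ∃ p : Fin 2 → ℤ, w = (g : Matrix (Fin 2) (Fin 2) ℝ).mulVec fun i => (p i : ℝ) := by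
  constructor
  · rintro ⟨g', hg', p, rfl⟩
    have hm0 : g'⁻¹ * g ∈ Gamma := by
      rw [QuotientGroup.eq] at hg'
      exact hg'
    have hm : g⁻¹ * g' ∈ Gamma := by
      have := Gamma.inv_mem hm0
      simpa using this
    obtain ⟨m, hm⟩ := hm
    refine ⟨(m : Matrix (Fin 2) (Fin 2) ℤ).mulVec p, ?_⟩
    have hg'' : g' = g * Matrix.SpecialLinearGroup.map (Int.castRingHom ℝ) m := by
      rw [hm]; group
    rw [hg'']
    have hcoe : ((Matrix.SpecialLinearGroup.map (Int.castRingHom ℝ) m : SL2R) :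
        Matrix (Fin 2) (Fin 2) ℝ) = (m : Matrix (Fin 2) (Fin 2) ℤ).map (Int.castRingHom ℝ) :=
      Matrix.SpecialLinearGroup.map_apply_coe _ _
    rw [Matrix.SpecialLinearGroup.coe_mul, hcoe, ← Matrix.mulVec_mulVec]
    funext i
    simp [Matrix.mulVec, dotProduct, Matrix.map_apply]
  · rintro ⟨p, hp⟩
    exact ⟨g, rfl, p, hp⟩


lemma mulVec_int_ne_zero (g : SL2R) {p : Fin 2 → ℤ} (hp : p ≠ 0) :
    ((g : Matrix (Fin 2) (Fin 2) ℝ).mulVec fun i => (p i : ℝ)) ≠ 0 := by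
  intro hq0
  apply hp
  have h1 : ((g⁻¹ : SL2R) : Matrix (Fin 2) (Fin 2) ℝ) *
      (g : Matrix (Fin 2) (Fin 2) ℝ) = 1 := by
    rw [← Matrix.SpecialLinearGroup.coe_mul]; simp
  have h2 := congrArg
    (fun w => ((g⁻¹ : SL2R) : Matrix (Fin 2) (Fin 2) ℝ).mulVec w) hq0
  simp only [Matrix.mulVec_mulVec, Matrix.mulVec_zero] at h2
  rw [h1, Matrix.one_mulVec] at h2
  funext i
  have := congrFun h2 i
  simpa using this


/-- if some lattice x₀ in the closure of the g_t-orbit of x contains a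
vector v with Q₀(v) = a ≠ 0, then a lies in the closure of Q₀(x \ {0}). -/
theorem stmt2 (x : XSp) (a : ℝ) (ha : a ≠ 0) (v : Fin 2 → ℝ) (hv : v 0 * v 1 = a)
    (h : ∃ x₀ ∈ closure {y : XSp | ∃ t : ℝ, y = gT t • x}, latMem v x₀) :
    a ∈ closure ((fun w : Fin 2 → ℝ => w 0 * w 1) '' {w | latMem w x ∧ w ≠ 0}) := by
  obtain ⟨x₀, hx₀, g₀, hg₀, p₀, hvp₀⟩ := h
  rw [Metric.mem_closure_iff]
  intro ε hε
  -- the open set T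
  set Q : (Fin 2 → ℝ) → ℝ := fun w => w 0 * w 1 with hQ
  set T : Set XSp := {y | ∃ g : SL2R, (QuotientGroup.mk g : XSp) = y ∧
      ∃ p : Fin 2 → ℤ, p ≠ 0 ∧
        |Q ((g : Matrix (Fin 2) (Fin 2) ℝ).mulVec fun i => (p i : ℝ)) - a| < ε} with hT
  have hcont : ∀ p : Fin 2 → ℤ, Continuous fun g : SL2R =>
      Q ((g : Matrix (Fin 2) (Fin 2) ℝ).mulVec fun i => (p i : ℝ)) := by
    intro p
    have hc : Continuous fun g : SL2R => (g : Matrix (Fin 2) (Fin 2) ℝ) :=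
      continuous_induced_dom
    have he : ∀ i j : Fin 2, Continuous fun g : SL2R =>
        (g : Matrix (Fin 2) (Fin 2) ℝ) i j := fun i j =>
      (continuous_apply j).comp ((continuous_apply i).comp hc)
    have : ∀ i : Fin 2, Continuous fun g : SL2R =>
        ((g : Matrix (Fin 2) (Fin 2) ℝ).mulVec fun i => (p i : ℝ)) i := by
      intro i
      simp only [Matrix.mulVec, dotProduct, Fin.sum_univ_two]
      exact (((he i 0).mul continuous_const).add ((he i 1).mul continuous_const))
    exact (this 0).mul (this 1)
  have hTopen : IsOpen T := by
    rw [isOpen_coinduced (f := (QuotientGroup.mk : SL2R → XSp))]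
    have : (QuotientGroup.mk : SL2R → XSp) ⁻¹' T =
        ⋃ p ∈ {p : Fin 2 → ℤ | p ≠ 0},
          (fun g : SL2R =>
            Q ((g : Matrix (Fin 2) (Fin 2) ℝ).mulVec fun i => (p i : ℝ))) ⁻¹'
              Metric.ball a ε := by
      ext g
      simp only [Set.mem_preimage, Set.mem_iUnion, Metric.mem_ball, hT, Set.mem_setOf_eq]
      constructor
      · rintro ⟨g', hg', p, hp, hlt⟩
        have := (latMem_mk_iff ((g' : Matrix (Fin 2) (Fin 2) ℝ).mulVec fun i => (p i : ℝ)) g).mp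
          ⟨g', hg', p, rfl⟩
        obtain ⟨q, hq⟩ := this
        refine ⟨q, ?_, ?_⟩
        · rintro rfl
          refine mulVec_int_ne_zero g' hp ?_
          rw [hq]; funext i; simp [Matrix.mulVec, dotProduct]
        · rw [Real.dist_eq, ← hq]
          exact hlt
      · rintro ⟨p, hp, hlt⟩
        exact ⟨g, rfl, p, hp, by rw [← Real.dist_eq]; exact hlt⟩
    rw [this]
    exact isOpen_biUnion fun p _ => (hcont p).isOpen_preimage _ Metric.isOpen_ball
  have hx₀T : x₀ ∈ T := by
    refine ⟨g₀, hg₀, p₀, ?_, ?_⟩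
    · rintro rfl
      apply ha
      rw [← hv, hvp₀]
      simp [Matrix.mulVec, dotProduct]
    · rw [← hvp₀]
      simpa [hQ, hv] using hε
  obtain ⟨y, hyT, hyS⟩ := _root_.mem_closure_iff.mp hx₀ T hTopen hx₀T
  obtain ⟨t, rfl⟩ := hyS
  obtain ⟨g, hg, p, hp, hlt⟩ := hyT
  set hmat : SL2R := (gT t)⁻¹ * g with hhdef
  have hmem : (QuotientGroup.mk hmat : XSp) = x := by
    have h3 : (QuotientGroup.mk hmat : XSp) = (gT t)⁻¹ • (QuotientGroup.mk g : XSp) := by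
      rw [MulAction.Quotient.smul_mk]
      rfl
    rw [h3, hg, inv_smul_smul]
  set u : Fin 2 → ℝ := (hmat : Matrix (Fin 2) (Fin 2) ℝ).mulVec fun i => (p i : ℝ) with hu
  have hune : u ≠ 0 := mulVec_int_ne_zero hmat hp
  have hgh : (g : Matrix (Fin 2) (Fin 2) ℝ) =
      ((gT t : SL2R) : Matrix (Fin 2) (Fin 2) ℝ) * (hmat : Matrix (Fin 2) (Fin 2) ℝ) := by
    rw [← Matrix.SpecialLinearGroup.coe_mul, hhdef]
    congr 1
    group
    rfl
  have het : Real.exp t * Real.exp (-t) = 1 := by rw [← Real.exp_add]; simp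
  have hQeq : Q ((g : Matrix (Fin 2) (Fin 2) ℝ).mulVec fun i => (p i : ℝ)) = Q u := by
    rw [hQ, hgh, ← Matrix.mulVec_mulVec, ← hu]
    show (((gT t : SL2R) : Matrix (Fin 2) (Fin 2) ℝ).mulVec u) 0 *
        (((gT t : SL2R) : Matrix (Fin 2) (Fin 2) ℝ).mulVec u) 1 = u 0 * u 1
    simp only [gT, Matrix.mulVec, dotProduct, Fin.sum_univ_two]
    simp
    linear_combination (u 0 * u 1) * het
  refine ⟨Q u, ⟨u, ⟨⟨hmat, hmem, p, hu⟩, hune⟩, rfl⟩, ?_⟩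
  rw [Real.dist_eq, abs_sub_comm, ← hQeq]
  exact hlt

end
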